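/- Let K be a field of characteristic 2 and let r, s ∈ ℤ with r ≤ s and r ≡ s (mod 2). Then ⁅x_1^r, x_2^s⁆ ∉ ⟨{⁅x_1^u, x_2^v⁆ : u, v ∈ ℤ, u ≤ v, u ≡ v (mod 2), (u, v) ≠ (r, s)}⟩_{T_ℤ}. (The graded identity ⁅x_1^r, x_2^s⁆ is not a consequence of the identities ⁅x_1^u, x_2^v⁆ with (u, v) ≠ (r, s).) -/

import Mathlib

open FreeLieAlgebra LaurentPolynomial

/-- The free Lie algebra `L` over `K` on the generators `x_i^a`, `(a, i) : ℤ × ℕ`;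
the generator `x_i^a := FreeLieAlgebra.of K (a, i)` has ℤ-degree `a`. -/
abbrev FL (K : Type*) [Field K] := FreeLieAlgebra K (ℤ × ℕ)

variable (K : Type*) [Field K]

/-- Iterated Lie brackets of generators whose ℤ-degrees sum to `a`. -/
inductive IsHomBracket : FL K → ℤ → Prop
  | gen (a : ℤ) (i : ℕ) : IsHomBracket (FreeLieAlgebra.of K (a, i)) a
  | bracket {u v : FL K} {a b : ℤ} :
      IsHomBracket u a → IsHomBracket v b → IsHomBracket ⁅u, v⁆ (a + b)

/-- The homogeneous component `L_a` of the free Lie algebra. -/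
noncomputable def homComp (a : ℤ) : Submodule K (FL K) :=
  Submodule.span K {w : FL K | IsHomBracket K w a}

/-- A graded endomorphism of the free Lie algebra. -/
def IsGradedEndo (φ : FL K →ₗ⁅K⁆ FL K) : Prop :=
  ∀ (a : ℤ) (i : ℕ), φ (FreeLieAlgebra.of K (a, i)) ∈ homComp K a

/-- A `T_ℤ`-ideal: a Lie ideal stable under all graded endomorphisms. -/
def IsTIdeal (I : LieIdeal K (FL K)) : Prop :=
  ∀ φ : FL K →ₗ⁅K⁆ FL K, IsGradedEndo K φ → ∀ x ∈ I, φ x ∈ I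

/-- `⟨S⟩_{T_ℤ}`, the smallest `T_ℤ`-ideal containing `S` (as a set of elements). -/
def TSpan (S : Set (FL K)) : Set (FL K) :=
  {x : FL K | ∀ I : LieIdeal K (FL K), IsTIdeal K I → S ⊆ (I : Set (FL K)) → x ∈ I}

section Aux

attribute [local instance 100] LieRing.ofAssociativeRing

variable {K}

lemma bracket_mem_homComp {a b : ℤ} {p q : FL K}
    (hp : p ∈ homComp K a) (hq : q ∈ homComp K b) : ⁅p, q⁆ ∈ homComp K (a + b) := by
  induction hp using Submodule.span_induction with
  | mem w hw =>
    induction hq using Submodule.span_induction with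
    | mem z hz => exact Submodule.subset_span (IsHomBracket.bracket hw hz)
    | zero => simp
    | add x y _ _ ihx ihy => rw [lie_add]; exact add_mem ihx ihy
    | smul c x _ ihx => rw [lie_smul]; exact Submodule.smul_mem _ c ihx
  | zero => simp
  | add x y _ _ ihx ihy => rw [add_lie]; exact add_mem ihx ihy
  | smul c x _ ihx => rw [smul_lie]; exact Submodule.smul_mem _ c ihx

lemma IsGradedEndo.map_mem {φ : FL K →ₗ⁅K⁆ FL K} (hφ : IsGradedEndo K φ)
    {a : ℤ} {p : FL K} (hp : p ∈ homComp K a) : φ p ∈ homComp K a := by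
  induction hp using Submodule.span_induction with
  | mem w hw =>
    induction hw with
    | gen b i => exact hφ b i
    | bracket hu hv ihu ihv => rw [LieHom.map_lie]; exact bracket_mem_homComp ihu ihv
  | zero => simp
  | add x y _ _ ihx ihy => rw [map_add]; exact add_mem ihx ihy
  | smul c x _ ihx => rw [map_smul]; exact Submodule.smul_mem _ c ihx

/-- The 3×3 matrix algebra target. -/
abbrev MK (K : Type*) [Field K] := Matrix (Fin 3) (Fin 3) K

noncomputable abbrev eM : MK K := Matrix.single 0 1 1
noncomputable abbrev fM : MK K := Matrix.single 1 2 1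
noncomputable abbrev hM : MK K := Matrix.single 0 2 1

lemma lie_ef : ⁅(eM : MK K), (fM : MK K)⁆ = (hM : MK K) := by
  simp [Ring.lie_def, eM, fM, hM]

lemma lie_fe : ⁅(fM : MK K), (eM : MK K)⁆ = -(hM : MK K) := by
  simp [Ring.lie_def, eM, fM, hM]

lemma lie_eh : ⁅(eM : MK K), (hM : MK K)⁆ = (0 : MK K) := by
  simp [Ring.lie_def, eM, fM, hM]

lemma lie_he : ⁅(hM : MK K), (eM : MK K)⁆ = (0 : MK K) := by
  simp [Ring.lie_def, eM, fM, hM]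

lemma lie_fh : ⁅(fM : MK K), (hM : MK K)⁆ = (0 : MK K) := by
  simp [Ring.lie_def, eM, fM, hM]

lemma lie_hf : ⁅(hM : MK K), (fM : MK K)⁆ = (0 : MK K) := by
  simp [Ring.lie_def, eM, fM, hM]

variable (K) in
/-- The graded pieces of the target. -/
def Aa (r s a : ℤ) : Submodule K (MK K) :=
  Submodule.span K {m | (a = r ∧ m = eM) ∨ (a = s ∧ m = fM) ∨ (a = r + s ∧ m = hM)}

lemma Aa_bracket {r s u v : ℤ} {p q : MK K} (hp : p ∈ Aa K r s u) (hq : q ∈ Aa K r s v) :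
    ⁅p, q⁆ ∈ Aa K r s (u + v) := by
  induction hp using Submodule.span_induction with
  | mem w hw =>
    induction hq using Submodule.span_induction with
    | mem z hz =>
      rcases hw with ⟨hu, rfl⟩ | ⟨hu, rfl⟩ | ⟨hu, rfl⟩ <;>
        rcases hz with ⟨hv, rfl⟩ | ⟨hv, rfl⟩ | ⟨hv, rfl⟩
      · rw [lie_self]; exact zero_mem _
      · rw [lie_ef]; exact Submodule.subset_span (Or.inr (Or.inr ⟨by omega, rfl⟩))
      · rw [lie_eh]; exact zero_mem _
      · rw [lie_fe]
        exact neg_mem (Submodule.subset_span (Or.inr (Or.inr ⟨by omega, rfl⟩)))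
      · rw [lie_self]; exact zero_mem _
      · rw [lie_fh]; exact zero_mem _
      · rw [lie_he]; exact zero_mem _
      · rw [lie_hf]; exact zero_mem _
      · rw [lie_self]; exact zero_mem _
    | zero => simp
    | add x y _ _ ihx ihy => rw [lie_add]; exact add_mem ihx ihy
    | smul c x _ ihx => rw [lie_smul]; exact Submodule.smul_mem _ c ihx
  | zero => simp
  | add x y _ _ ihx ihy => rw [add_lie]; exact add_mem ihx ihy
  | smul c x _ ihx => rw [smul_lie]; exact Submodule.smul_mem _ c ihx

lemma Aa_lie_eq_zero {r s u v : ℤ} (hrs : r ≤ s) (huv : u ≤ v) (hne : (u, v) ≠ (r, s))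
    {p q : MK K} (hp : p ∈ Aa K r s u) (hq : q ∈ Aa K r s v) : ⁅p, q⁆ = 0 := by
  induction hp using Submodule.span_induction with
  | mem w hw =>
    induction hq using Submodule.span_induction with
    | mem z hz =>
      rcases hw with ⟨hu, rfl⟩ | ⟨hu, rfl⟩ | ⟨hu, rfl⟩ <;>
        rcases hz with ⟨hv, rfl⟩ | ⟨hv, rfl⟩ | ⟨hv, rfl⟩
      · exact lie_self _
      · exact absurd (by rw [hu, hv]) hne
      · exact lie_eh
      · have h1 : u = r := by omega
        have h2 : v = s := by omega
        exact absurd (by rw [h1, h2]) hne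
      · exact lie_self _
      · exact lie_fh
      · exact lie_he
      · exact lie_hf
      · exact lie_self _
    | zero => simp
    | add x y _ _ ihx ihy => rw [lie_add, ihx, ihy, add_zero]
    | smul c x _ ihx => rw [lie_smul, ihx, smul_zero]
  | zero => simp
  | add x y _ _ ihx ihy => rw [add_lie, ihx, ihy, add_zero]
  | smul c x _ ihx => rw [smul_lie, ihx, smul_zero]

variable (K) in
/-- The separating homomorphism. -/
noncomputable def psiM (r s : ℤ) : FL K →ₗ⁅K⁆ MK K :=
  FreeLieAlgebra.lift K (fun p => if p = (r, 1) then eM else if p = (s, 2) then fM else 0)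

lemma psiM_mem {r s a : ℤ} {p : FL K} (hp : p ∈ homComp K a) :
    psiM K r s p ∈ Aa K r s a := by
  induction hp using Submodule.span_induction with
  | mem w hw =>
    induction hw with
    | gen b i =>
      rw [psiM, FreeLieAlgebra.lift_of_apply]
      split_ifs with h1 h2
      · simp only [Prod.mk.injEq] at h1
        exact Submodule.subset_span (Or.inl ⟨h1.1, rfl⟩)
      · simp only [Prod.mk.injEq] at h2
        exact Submodule.subset_span (Or.inr (Or.inl ⟨h2.1, rfl⟩))
      · exact zero_mem _
    | bracket hu hv ihu ihv => rw [LieHom.map_lie]; exact Aa_bracket ihu ihv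
  | zero => simp
  | add x y _ _ ihx ihy => rw [map_add]; exact add_mem ihx ihy
  | smul c x _ ihx => rw [map_smul]; exact Submodule.smul_mem _ c ihx

variable (K) in
/-- The Lie ideal of elements killed by `psiM` after every graded endomorphism. -/
noncomputable def sepIdeal (r s : ℤ) : LieIdeal K (FL K) where
  carrier := {y | ∀ φ : FL K →ₗ⁅K⁆ FL K, IsGradedEndo K φ → psiM K r s (φ y) = 0}
  add_mem' := fun hx hy φ hφ => by rw [map_add, map_add, hx φ hφ, hy φ hφ, add_zero]
  zero_mem' := fun φ hφ => by rw [map_zero, map_zero]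
  smul_mem' := fun c x hx φ hφ => by rw [map_smul, map_smul, hx φ hφ, smul_zero]
  lie_mem := fun hx φ hφ => by rw [LieHom.map_lie, LieHom.map_lie, hx φ hφ, lie_zero]

lemma mem_sepIdeal_iff {r s : ℤ} {y : FL K} :
    y ∈ sepIdeal K r s ↔
      ∀ φ : FL K →ₗ⁅K⁆ FL K, IsGradedEndo K φ → psiM K r s (φ y) = 0 :=
  Iff.rfl

lemma psiM_of_r {r s : ℤ} : psiM K r s (FreeLieAlgebra.of K (r, 1)) = eM := by
  rw [psiM, FreeLieAlgebra.lift_of_apply, if_pos rfl]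

lemma psiM_of_s {r s : ℤ} : psiM K r s (FreeLieAlgebra.of K (s, 2)) = fM := by
  rw [psiM, FreeLieAlgebra.lift_of_apply, if_neg (by simp), if_pos rfl]

variable (K) in
lemma id_isGradedEndo : IsGradedEndo K (LieHom.id : FL K →ₗ⁅K⁆ FL K) := fun a i =>
  Submodule.subset_span (IsHomBracket.gen a i)

end Aux

attribute [local instance 100] LieRing.ofAssociativeRing

/-- Lemma 4.1: `⁅x_1^r, x_2^s⁆` is not a consequence of the identities `⁅x_1^u, x_2^v⁆`
with `u ≤ v`, `u ≡ v (mod 2)`, `(u, v) ≠ (r, s)`. -/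
theorem frs_not_consequence [CharP K 2] (r s : ℤ) (hrs : r ≤ s) (hmod : r ≡ s [ZMOD 2]) :
    ⁅FreeLieAlgebra.of K (r, 1), FreeLieAlgebra.of K (s, 2)⁆ ∉
      TSpan K {f : FL K | ∃ u v : ℤ, u ≤ v ∧ u ≡ v [ZMOD 2] ∧ (u, v) ≠ (r, s) ∧
        f = ⁅FreeLieAlgebra.of K (u, 1), FreeLieAlgebra.of K (v, 2)⁆} := by
  intro hmem
  have hI : (⁅FreeLieAlgebra.of K (r, 1), FreeLieAlgebra.of K (s, 2)⁆ : FL K)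
      ∈ sepIdeal K r s := by
    apply hmem
    · intro φ hφ x hx
      rw [mem_sepIdeal_iff] at hx ⊢
      intro φ' hφ'
      have hcomp : IsGradedEndo K (φ'.comp φ) := fun a i =>
        hφ'.map_mem (hφ a i)
      simpa using hx (φ'.comp φ) hcomp
    · rintro f ⟨u, v, huv, -, hne, rfl⟩
      rw [SetLike.mem_coe, mem_sepIdeal_iff]
      intro φ hφ
      rw [LieHom.map_lie, LieHom.map_lie]
      exact Aa_lie_eq_zero hrs huv hne (psiM_mem (hφ u 1)) (psiM_mem (hφ v 2))
  rw [mem_sepIdeal_iff] at hI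
  have h0 := hI LieHom.id (id_isGradedEndo K)
  rw [LieHom.id_apply, LieHom.map_lie, psiM_of_r, psiM_of_s, lie_ef] at h0
  have h2 := Matrix.ext_iff.2 h0 0 2
  simp only [hM, Matrix.single_apply_same, Matrix.zero_apply] at h2
  exact one_ne_zero h2
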